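/- Let J ⊆ ℂ[x,y,z] be the ideal generated by the images f_{x,y}^ℂ, f_{x,z}^ℂ, f_{y,z}^ℂ of the three minor polynomials under coefficient extension ℝ[x,y,z] → ℂ[x,y,z]. For an ideal P of ℂ[x,y,z], let V_ℝ(P) = {v ∈ ℝ³ : every element of P vanishes at (v₁, v₂, v₃)} denote its real points, and call a minimal prime P over J relevant if O ∈ V_ℝ(P). Then Tendsto q (𝓝[{v : v ≠ O}] O) (𝓝 L) if and only if for every relevant minimal prime P over J, q tends to L at O along V_ℝ(P). -/

import Mathlib

open MvPolynomial Filter Topology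

/-- The quotient `q(v) = f(v)/g(v)`, with the convention `q(v) = 0` when `g(v) = 0`. -/
noncomputable def quotFun (f g : MvPolynomial (Fin 3) ℝ) (v : EuclideanSpace ℝ (Fin 3)) : ℝ :=
  eval v f / eval v g

/-- The polynomial `f_{xᵢ,xⱼ} = xᵢ(g ∂f/∂xⱼ − f ∂g/∂xⱼ) − xⱼ(g ∂f/∂xᵢ − f ∂g/∂xᵢ)`. -/
noncomputable def minorPoly (f g : MvPolynomial (Fin 3) ℝ) (i j : Fin 3) :
    MvPolynomial (Fin 3) ℝ :=
  X i * (g * pderiv j f - f * pderiv j g) - X j * (g * pderiv i f - f * pderiv i g)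

/-- The ideal `J ⊆ ℂ[x,y,z]` generated by the complexifications of the three minor
polynomials. -/
noncomputable def discrimIdeal (f g : MvPolynomial (Fin 3) ℝ) :
    Ideal (MvPolynomial (Fin 3) ℂ) :=
  Ideal.span {MvPolynomial.map (algebraMap ℝ ℂ) (minorPoly f g 0 1),
    MvPolynomial.map (algebraMap ℝ ℂ) (minorPoly f g 0 2),
    MvPolynomial.map (algebraMap ℝ ℂ) (minorPoly f g 1 2)}

/-- The real points of an ideal `P` of `ℂ[x,y,z]`. -/
def realPoints (P : Ideal (MvPolynomial (Fin 3) ℂ)) : Set (EuclideanSpace ℝ (Fin 3)) :=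
  {v | ∀ p ∈ P, eval (fun i => (v i : ℂ)) p = 0}

lemma hasDerivAt_eval_comp (p : MvPolynomial (Fin 3) ℝ) (c : Fin 3 → ℝ → ℝ) (d : Fin 3 → ℝ)
    (t₀ : ℝ) (hc : ∀ i, HasDerivAt (fun t => c i t) (d i) t₀) :
    HasDerivAt (fun t => eval (fun i => c i t) p)
      (∑ i, eval (fun i => c i t₀) (pderiv i p) * d i) t₀ := by
  induction p using MvPolynomial.induction_on with
  | C a => simpa using hasDerivAt_const t₀ a
  | add p q hp hq =>
      have := hp.add hq
      simp only [eval_add, map_add] at this ⊢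
      refine this.congr_deriv (Eq.symm ?_)
      rw [← Finset.sum_add_distrib]
      congr 1; funext i; ring
  | mul_X p n hp =>
      have h := hp.mul (hc n)
      simp only [eval_mul, eval_X] at h ⊢
      refine h.congr_deriv (Eq.symm ?_)
      simp only [pderiv_mul, pderiv_X, eval_add, eval_mul, eval_X, add_mul,
        Finset.sum_add_distrib, Finset.mul_sum, Finset.sum_mul]
      congr 1
      · congr 1; funext i; ring
      · rw [Finset.sum_eq_single n] <;> simp +contextual [Pi.single_apply]

lemma minor_vanish (f g : MvPolynomial (Fin 3) ℝ) {s : ℝ} (hs : 0 < s)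
    (w : EuclideanSpace ℝ (Fin 3)) (hw : w ∈ Metric.sphere (0 : EuclideanSpace ℝ (Fin 3)) s)
    (hgw : eval w g ≠ 0)
    (hext : IsExtrOn (quotFun f g) (Metric.sphere (0 : EuclideanSpace ℝ (Fin 3)) s) w)
    (i j : Fin 3) (hij : i ≠ j) :
    eval w (minorPoly f g i j) = 0 := by
  classical
  let c : Fin 3 → ℝ → ℝ := fun k t =>
    if k = i then w i * Real.cos t - w j * Real.sin t
    else if k = j then w i * Real.sin t + w j * Real.cos t
    else w k
  let d : Fin 3 → ℝ := fun k => if k = i then -(w j) else if k = j then w i else 0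
  have hc0 : (fun k => c k 0) = (w : Fin 3 → ℝ) := by
    funext k
    show (if k = i then w i * Real.cos 0 - w j * Real.sin 0
      else if k = j then w i * Real.sin 0 + w j * Real.cos 0 else w k) = w k
    split_ifs with h1 h2
    · subst h1; simp
    · subst h2; simp
    · rfl
  have hcderiv : ∀ k, HasDerivAt (fun t => c k t) (d k) 0 := by
    intro k
    show HasDerivAt (fun t => if k = i then w i * Real.cos t - w j * Real.sin t
      else if k = j then w i * Real.sin t + w j * Real.cos t else w k)
      (if k = i then -(w j) else if k = j then w i else 0) 0
    split_ifs with h1 h2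
    · simpa [Pi.sub_def] using ((Real.hasDerivAt_cos 0).const_mul (w i)).sub
        ((Real.hasDerivAt_sin 0).const_mul (w j))
    · simpa [Pi.add_def] using ((Real.hasDerivAt_sin 0).const_mul (w i)).add
        ((Real.hasDerivAt_cos 0).const_mul (w j))
    · exact hasDerivAt_const 0 (w k)
  have hsumsq : ∀ t, ∑ k : Fin 3, (c k t)^2 = ∑ k : Fin 3, (w k)^2 := by
    intro t
    show ∑ k : Fin 3, (if k = i then w i * Real.cos t - w j * Real.sin t
      else if k = j then w i * Real.sin t + w j * Real.cos t else w k)^2 = _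
    fin_cases i <;> fin_cases j <;> simp_all [Fin.sum_univ_three] <;>
      first
        | linear_combination ((w 0)^2+(w 1)^2) * Real.sin_sq_add_cos_sq t
        | linear_combination ((w 0)^2+(w 2)^2) * Real.sin_sq_add_cos_sq t
        | linear_combination ((w 1)^2+(w 2)^2) * Real.sin_sq_add_cos_sq t
  let wt : ℝ → EuclideanSpace ℝ (Fin 3) :=
    fun t => (WithLp.equiv 2 (Fin 3 → ℝ)).symm (fun k => c k t)
  have hnorm : ∀ t, wt t ∈ Metric.sphere (0 : EuclideanSpace ℝ (Fin 3)) s := by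
    intro t
    rw [mem_sphere_zero_iff_norm] at hw ⊢
    rw [EuclideanSpace.norm_eq] at hw ⊢
    rw [← hw]
    congr 1
    simpa [wt, Real.norm_eq_abs, sq_abs] using hsumsq t
  have hwt0 : wt 0 = w := by
    exact congrArg (WithLp.equiv 2 (Fin 3 → ℝ)).symm hc0
  have hF : HasDerivAt (fun t => eval (fun k => c k t) f)
      (∑ k, eval (w : Fin 3 → ℝ) (pderiv k f) * d k) 0 := by
    have h := hasDerivAt_eval_comp f c d 0 hcderiv
    rwa [hc0] at h
  have hG : HasDerivAt (fun t => eval (fun k => c k t) g)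
      (∑ k, eval (w : Fin 3 → ℝ) (pderiv k g) * d k) 0 := by
    have h := hasDerivAt_eval_comp g c d 0 hcderiv
    rwa [hc0] at h
  have hg0 : eval (fun k => c k 0) g ≠ 0 := by rw [hc0]; exact hgw
  have hφ : HasDerivAt (fun t => quotFun f g (wt t))
      (((∑ k, eval (w : Fin 3 → ℝ) (pderiv k f) * d k) * eval (fun k => c k 0) g -
        eval (fun k => c k 0) f * (∑ k, eval (w : Fin 3 → ℝ) (pderiv k g) * d k)) /
        (eval (fun k => c k 0) g) ^ 2) 0 := hF.div hG hg0
  have hlocext : IsLocalExtr (fun t => quotFun f g (wt t)) 0 := by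
    rcases hext with h | h
    · exact Or.inl (Filter.Eventually.of_forall fun t => by
        simpa [hwt0] using h (hnorm t))
    · exact Or.inr (Filter.Eventually.of_forall fun t => by
        simpa [hwt0] using h (hnorm t))
  have hD0 : ((∑ k, eval (w : Fin 3 → ℝ) (pderiv k f) * d k) * eval (fun k => c k 0) g -
        eval (fun k => c k 0) f * (∑ k, eval (w : Fin 3 → ℝ) (pderiv k g) * d k)) /
        (eval (fun k => c k 0) g) ^ 2 = 0 := by
    rw [← hφ.deriv]; exact hlocext.deriv_eq_zero
  rw [div_eq_zero_iff] at hD0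
  have hkey : (∑ k, eval (w : Fin 3 → ℝ) (pderiv k f) * d k) * eval (w : Fin 3 → ℝ) g -
      eval (w : Fin 3 → ℝ) f * (∑ k, eval (w : Fin 3 → ℝ) (pderiv k g) * d k) = 0 := by
    rcases hD0 with h | h
    · rw [hc0] at h; exact h
    · exact absurd h (by rw [hc0]; exact pow_ne_zero 2 hgw)
  have hsum : ∀ h : Fin 3 → ℝ, ∑ k, h k * d k = h i * (-(w j)) + h j * (w i) := by
    intro h
    have hterm : ∀ k, h k * d k =
        (if k = i then h i * (-(w j)) else 0) + (if k = j then h j * (w i) else 0) := by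
      intro k
      show h k * (if k = i then -(w j) else if k = j then w i else 0) = _
      by_cases h1 : k = i
      · subst h1; simp [hij]
      · by_cases h2 : k = j
        · subst h2; simp [h1]
        · simp [h1, h2]
    rw [Finset.sum_congr rfl (fun k _ => hterm k), Finset.sum_add_distrib,
      Finset.sum_ite_eq' Finset.univ i (fun _ => h i * (-(w j))),
      Finset.sum_ite_eq' Finset.univ j (fun _ => h j * (w i))]
    simp
  rw [hsum (fun k => eval (w : Fin 3 → ℝ) (pderiv k f)),
    hsum (fun k => eval (w : Fin 3 → ℝ) (pderiv k g))] at hkey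
  simp only [minorPoly, eval_sub, eval_mul, eval_X]
  linear_combination hkey

lemma continuous_evalR (p : MvPolynomial (Fin 3) ℝ) :
    Continuous fun v : EuclideanSpace ℝ (Fin 3) => eval v p :=
  (MvPolynomial.continuous_eval p).comp (PiLp.continuous_ofLp 2 fun _ : Fin 3 => ℝ)

lemma continuous_evalC (p : MvPolynomial (Fin 3) ℂ) :
    Continuous fun v : EuclideanSpace ℝ (Fin 3) => eval (fun i => (v i : ℂ)) p := by
  apply (MvPolynomial.continuous_eval p).comp
  apply continuous_pi
  intro i
  exact Complex.continuous_ofReal.comp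
    ((continuous_apply i).comp (PiLp.continuous_ofLp 2 fun _ : Fin 3 => ℝ))

lemma isClosed_realPoints (P : Ideal (MvPolynomial (Fin 3) ℂ)) :
    IsClosed (realPoints P) := by
  have h : realPoints P = ⋂ p ∈ (P : Set (MvPolynomial (Fin 3) ℂ)),
      {v : EuclideanSpace ℝ (Fin 3) | eval (fun i => (v i : ℂ)) p = 0} := by
    ext v; simp [realPoints]
  rw [h]
  exact isClosed_biInter fun p _ => isClosed_eq (continuous_evalC p) continuous_const

lemma eval_map_coe (p : MvPolynomial (Fin 3) ℝ) (w : Fin 3 → ℝ) :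
    eval (fun i => (w i : ℂ)) (MvPolynomial.map (algebraMap ℝ ℂ) p) =
      ((eval w p : ℝ) : ℂ) := by
  induction p using MvPolynomial.induction_on with
  | C a => simp [Complex.coe_algebraMap]
  | add p q hp hq => simp [hp, hq]
  | mul_X p n hp => simp [hp]

lemma finite_minimalPrimes (I : Ideal (MvPolynomial (Fin 3) ℂ)) :
    I.minimalPrimes.Finite := by
  rw [Ideal.minimalPrimes_eq_comap]
  exact (minimalPrimes.finite_of_isNoetherianRing _).image _

lemma exists_minimalPrime_mem (f g : MvPolynomial (Fin 3) ℝ) (w : EuclideanSpace ℝ (Fin 3))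
    (h01 : eval w (minorPoly f g 0 1) = 0) (h02 : eval w (minorPoly f g 0 2) = 0)
    (h12 : eval w (minorPoly f g 1 2) = 0) :
    ∃ P ∈ (discrimIdeal f g).minimalPrimes, w ∈ realPoints P := by
  set φ : MvPolynomial (Fin 3) ℂ →+* ℂ := eval (fun i => (w i : ℂ)) with hφ
  have hker : discrimIdeal f g ≤ RingHom.ker φ := by
    rw [discrimIdeal, Ideal.span_le]
    rintro p hp
    simp only [Set.mem_insert_iff, Set.mem_singleton_iff] at hp
    rcases hp with rfl | rfl | rfl <;> rw [SetLike.mem_coe, RingHom.mem_ker, hφ] <;>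
      rw [eval_map_coe] <;> simp [h01, h02, h12]
  haveI : (RingHom.ker φ).IsPrime := RingHom.ker_isPrime φ
  obtain ⟨P, hP, hPle⟩ := Ideal.exists_minimalPrimes_le hker
  exact ⟨P, hP, fun p hp => RingHom.mem_ker.mp (hPle hp)⟩

/-- The limit of `q` at the origin exists and equals `L` iff `q` tends to `L` along the
real points of each relevant minimal prime over the discriminant ideal (i.e. each minimal
prime whose real locus contains the origin). -/
theorem limit_iff_limit_along_relevant_components (f g : MvPolynomial (Fin 3) ℝ)
    (hg : ∃ ε > 0, ∀ v ∈ Metric.ball (0 : EuclideanSpace ℝ (Fin 3)) ε, eval v g = 0 → v = 0)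
    (L : ℝ) :
    Tendsto (quotFun f g) (𝓝[{v : EuclideanSpace ℝ (Fin 3) | v ≠ 0}] 0) (𝓝 L) ↔
      ∀ P ∈ (discrimIdeal f g).minimalPrimes, (0 : EuclideanSpace ℝ (Fin 3)) ∈ realPoints P →
        Tendsto (quotFun f g) (𝓝[realPoints P \ {0}] 0) (𝓝 L) := by
  classical
  constructor
  · intro h P hP h0
    exact h.mono_left (nhdsWithin_mono 0 fun v hv => by simpa using hv.2)
  · intro h
    obtain ⟨ε, hε, hball⟩ := hg
    have hfin := finite_minimalPrimes (discrimIdeal f g)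
    rw [Metric.tendsto_nhdsWithin_nhds]
    intro δ hδ
    have hev : ∀ P ∈ (discrimIdeal f g).minimalPrimes, ∃ r > 0,
        ∀ v : EuclideanSpace ℝ (Fin 3), v ∈ realPoints P → v ≠ 0 → dist v 0 < r →
          dist (quotFun f g v) L < δ := by
      intro P hP
      by_cases h0 : (0 : EuclideanSpace ℝ (Fin 3)) ∈ realPoints P
      · obtain ⟨r, hr, hrs⟩ := Metric.tendsto_nhdsWithin_nhds.mp (h P hP h0) δ hδ
        exact ⟨r, hr, fun v hv hv0 hd => hrs ⟨hv, hv0⟩ hd⟩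
      · obtain ⟨r, hr, hrs⟩ :=
          Metric.isOpen_iff.mp (isClosed_realPoints P).isOpen_compl 0 h0
        exact ⟨r, hr, fun v hv hv0 hd =>
          absurd hv (hrs (by simpa [Metric.mem_ball] using hd))⟩
    choose! r hrpos hrprop using hev
    obtain ⟨r₀, hr₀pos, hr₀le⟩ :
        ∃ r₀ > 0, ∀ P ∈ (discrimIdeal f g).minimalPrimes, r₀ ≤ r P := by
      set T := insert (1 : ℝ) (hfin.toFinset.image r) with hT
      have hTne : T.Nonempty := ⟨1, Finset.mem_insert_self _ _⟩
      refine ⟨T.min' hTne, ?_, ?_⟩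
      · rcases Finset.mem_insert.mp (T.min'_mem hTne) with h1 | h1
        · rw [h1]; norm_num
        · obtain ⟨P, hP, hPe⟩ := Finset.mem_image.mp h1
          rw [← hPe]; exact hrpos P (hfin.mem_toFinset.mp hP)
      · intro P hP
        exact T.min'_le _ (Finset.mem_insert_of_mem
          (Finset.mem_image_of_mem r (hfin.mem_toFinset.mpr hP)))
    refine ⟨min r₀ ε, lt_min hr₀pos hε, ?_⟩
    intro v hv hvd
    have hv0 : v ≠ 0 := hv
    have hsn : 0 < ‖v‖ := norm_pos_iff.mpr hv0
    have hvlt : ‖v‖ < min r₀ ε := by rwa [dist_zero_right] at hvd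
    have hgs : ∀ u ∈ Metric.sphere (0 : EuclideanSpace ℝ (Fin 3)) ‖v‖, eval u g ≠ 0 := by
      intro u hu hu0
      have hun : ‖u‖ = ‖v‖ := mem_sphere_zero_iff_norm.mp hu
      have hune : u ≠ 0 := by
        intro hc; rw [hc, norm_zero] at hun; exact hsn.ne hun
      exact hune (hball u (by
        rw [Metric.mem_ball, dist_zero_right, hun]
        exact hvlt.trans_le (min_le_right _ _)) hu0)
    have hqc : ContinuousOn (quotFun f g)
        (Metric.sphere (0 : EuclideanSpace ℝ (Fin 3)) ‖v‖) :=
      (continuous_evalR f).continuousOn.div (continuous_evalR g).continuousOn hgs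
    have hsne : (Metric.sphere (0 : EuclideanSpace ℝ (Fin 3)) ‖v‖).Nonempty :=
      NormedSpace.sphere_nonempty.mpr hsn.le
    obtain ⟨w₁, hw₁s, hw₁max⟩ := (isCompact_sphere _ _).exists_isMaxOn hsne hqc
    obtain ⟨w₂, hw₂s, hw₂min⟩ := (isCompact_sphere _ _).exists_isMinOn hsne hqc
    have key : ∀ w ∈ Metric.sphere (0 : EuclideanSpace ℝ (Fin 3)) ‖v‖,
        IsExtrOn (quotFun f g) (Metric.sphere (0 : EuclideanSpace ℝ (Fin 3)) ‖v‖) w →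
        dist (quotFun f g w) L < δ := by
      intro w hws hwe
      have hminors : ∀ i j, i ≠ j → eval w (minorPoly f g i j) = 0 :=
        fun i j hij => minor_vanish f g hsn w hws (hgs w hws) hwe i j hij
      obtain ⟨P, hP, hwP⟩ := exists_minimalPrime_mem f g w
        (hminors 0 1 (by decide)) (hminors 0 2 (by decide)) (hminors 1 2 (by decide))
      have hwn : ‖w‖ = ‖v‖ := mem_sphere_zero_iff_norm.mp hws
      have hw0 : w ≠ 0 := by
        intro hc; rw [hc, norm_zero] at hwn; exact hsn.ne hwn
      refine hrprop P hP w hwP hw0 ?_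
      rw [dist_zero_right, hwn]
      exact lt_of_lt_of_le (hvlt.trans_le (min_le_left _ _)) (hr₀le P hP)
    have h1 : dist (quotFun f g w₁) L < δ := key w₁ hw₁s (Or.inr hw₁max)
    have h2 : dist (quotFun f g w₂) L < δ := key w₂ hw₂s (Or.inl hw₂min)
    have hvs : v ∈ Metric.sphere (0 : EuclideanSpace ℝ (Fin 3)) ‖v‖ :=
      mem_sphere_zero_iff_norm.mpr rfl
    have hle1 : quotFun f g v ≤ quotFun f g w₁ := hw₁max hvs
    have hle2 : quotFun f g w₂ ≤ quotFun f g v := hw₂min hvs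
    rw [Real.dist_eq, abs_sub_lt_iff] at h1 h2 ⊢
    constructor <;> linarith
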